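/- With f_{y,a}(z) = ∑_{n≥0} C(y-a(n-1),n) z^n and g_{y,a} as above, one has f_{y,a} = (g_{1,a})^y · f_{0,a} as formal power series in z, for all rational y and a. -/

import Mathlib

open PowerSeries Finset

/-- Generalized binomial coefficient `C(x,n) = x(x-1)⋯(x-n+1)/n!`. -/
noncomputable def gchoose (x : ℚ) (n : ℕ) : ℚ :=
  (∏ i ∈ Finset.range n, (x - i)) / n.factorial

/-- `g_{y,a}(z) = ∑_{n≥0} (y/(y-an)) C(y-an,n) z^n`, with the `n`-th coefficient
interpreted as `y·C(y-an-1,n-1)/n` for `n ≥ 1` and constant term `1`. -/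
noncomputable def gSeries (y a : ℚ) : PowerSeries ℚ :=
  PowerSeries.mk fun n =>
    if n = 0 then 1 else y * gchoose (y - a * (n : ℚ) - 1) (n - 1) / (n : ℚ)

/-- The binomial-series power `(1+w)^y := ∑_k C(y,k) w^k` of `1 + w`, for `w` a power
series with zero constant term (the coefficient of `z^n` in `w^k` vanishes for `k > n`,
so each coefficient is the indicated finite sum). -/
noncomputable def binPow (w : PowerSeries ℚ) (y : ℚ) : PowerSeries ℚ :=
  PowerSeries.mk fun n =>
    ∑ k ∈ Finset.range (n + 1), gchoose y k * PowerSeries.coeff n (w ^ k)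

lemma gchoose_zero (x : ℚ) : gchoose x 0 = 1 := by simp [gchoose]

lemma gchoose_one (x : ℚ) : gchoose x 1 = x := by simp [gchoose]

lemma gchoose_absorb (x : ℚ) (k : ℕ) :
    ((k : ℚ) + 1) * gchoose x (k + 1) = x * gchoose (x - 1) k := by
  have h1 : ∏ i ∈ Finset.range (k + 1), (x - i) = x * ∏ i ∈ Finset.range k, (x - 1 - i) := by
    rw [Finset.prod_range_succ']
    simp only [Nat.cast_zero, sub_zero, Nat.cast_add, Nat.cast_one]
    rw [mul_comm]
    congr 1
    exact Finset.prod_congr rfl fun i _ => by push_cast; ring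
  simp only [gchoose, Nat.factorial_succ, h1]
  push_cast
  field_simp

lemma gchoose_absorb' (x : ℚ) (k : ℕ) :
    ((k : ℚ) + 1) * gchoose x (k + 1) = (x - k) * gchoose x k := by
  simp only [gchoose, Finset.prod_range_succ, Nat.factorial_succ]
  push_cast
  field_simp

lemma gchoose_pascal (x : ℚ) (k : ℕ) :
    gchoose x (k + 1) = gchoose (x - 1) (k + 1) + gchoose (x - 1) k := by
  have hk : ((k : ℚ) + 1) ≠ 0 := by positivity
  have h1 := gchoose_absorb x k
  have h2 := gchoose_absorb' (x - 1) k
  have : ((k : ℚ) + 1) * gchoose x (k + 1)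
      = ((k : ℚ) + 1) * (gchoose (x - 1) (k + 1) + gchoose (x - 1) k) := by
    rw [h1, mul_add, h2]; ring
  exact mul_left_cancel₀ hk this

lemma gchoose_nat (m k : ℕ) : gchoose (m : ℚ) k = m.choose k := by
  induction m generalizing k with
  | zero =>
    cases k with
    | zero => simp [gchoose]
    | succ k =>
      have h0 : (0:ℕ) ∈ Finset.range (k+1) := Finset.mem_range.2 (Nat.succ_pos k)
      have hp : ∏ i ∈ Finset.range (k+1), ((0:ℚ) - i) = 0 :=
        Finset.prod_eq_zero h0 (by simp)
      simp only [gchoose, Nat.cast_zero, hp, zero_div,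
        Nat.choose_eq_zero_of_lt (Nat.succ_pos k), Nat.cast_zero]
  | succ m ih =>
    cases k with
    | zero => simp [gchoose]
    | succ k =>
      have : ((m : ℚ) + 1) - 1 = m := by ring
      rw [Nat.cast_succ, gchoose_pascal, this, ih, ih, Nat.choose_succ_succ]
      push_cast; ring

-- polynomial machinery
noncomputable def pg (c : ℚ) (k : ℕ) : Polynomial ℚ :=
  Polynomial.C (1 / (k.factorial : ℚ)) * ∏ i ∈ Finset.range k, (Polynomial.X + Polynomial.C (c - i))

lemma eval_pg (c x : ℚ) (k : ℕ) : (pg c k).eval x = gchoose (x + c) k := by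
  simp only [pg, gchoose, Polynomial.eval_mul, Polynomial.eval_C, Polynomial.eval_prod,
    Polynomial.eval_add, Polynomial.eval_X]
  have h : ∏ i ∈ Finset.range k, (x + (c - (i:ℚ))) = ∏ i ∈ Finset.range k, (x + c - i) :=
    Finset.prod_congr rfl fun i _ => by ring
  rw [h, div_eq_mul_inv]
  ring

lemma poly_eq_of_eval_nat (p q : Polynomial ℚ) (h : ∀ m : ℕ, p.eval (m : ℚ) = q.eval (m : ℚ)) :
    p = q := by
  rw [← sub_eq_zero]
  apply Polynomial.eq_zero_of_infinite_isRoot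
  apply Set.infinite_of_injective_forall_mem
    (f := fun m : ℕ => (m : ℚ)) (Nat.cast_injective)
  intro m
  simp [Polynomial.IsRoot, h m]

lemma poly_const_of_step (p : Polynomial ℚ) (h : ∀ x : ℚ, p.eval x = p.eval (x - 1))
    (h0 : p.eval 0 = 0) : ∀ x : ℚ, p.eval x = 0 := by
  have hn : ∀ m : ℕ, p.eval (m : ℚ) = 0 := by
    intro m
    induction m with
    | zero => simpa using h0
    | succ m ih =>
      have := h ((m : ℚ) + 1)
      push_cast
      rw [this]; simpa using ih
  have : p = 0 := poly_eq_of_eval_nat p 0 (by simpa using hn)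
  simp [this]

-- the B and A coefficient families
noncomputable def Bc (a u : ℚ) (k : ℕ) : ℚ := gchoose (u - a * k) k

noncomputable def Ac (a x : ℚ) : ℕ → ℚ
  | 0 => 1
  | (k + 1) => Bc a x (k + 1) + a * Bc a (x - a - 1) k

lemma Bc_zero (a u : ℚ) : Bc a u 0 = 1 := by simp [Bc, gchoose_zero]

lemma Bc_pascal (a u : ℚ) (k : ℕ) :
    Bc a u (k + 1) = Bc a (u - 1) (k + 1) + Bc a (u - a - 1) k := by
  simp only [Bc]
  have h1 : u - 1 - a * ((k : ℚ) + 1) = u - a * ((k : ℚ) + 1) - 1 := by ring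
  have h2 : u - a - 1 - a * (k : ℚ) = u - a * ((k : ℚ) + 1) - 1 := by ring
  have h := gchoose_pascal (u - a * ((k : ℚ) + 1)) k
  push_cast
  rw [h1, h2]
  exact h

lemma Ac_pascal (a x : ℚ) (k : ℕ) :
    Ac a x (k + 1) = Ac a (x - 1) (k + 1) + Ac a (x - a - 1) k := by
  cases k with
  | zero =>
    simp only [Ac, Bc, gchoose_zero, zero_add, gchoose_one]
    push_cast [gchoose_one]
    ring
  | succ j =>
    simp only [Ac]
    rw [Bc_pascal a x (j + 1), Bc_pascal a (x - a - 1) j]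
    have e1 : x - a - 1 - 1 = x - 1 - a - 1 := by ring
    have e2 : x - a - 1 - a - 1 = x - a - 1 - a - 1 := rfl
    rw [e1]
    ring

lemma Ac_zero (a : ℚ) (k : ℕ) : Ac a 0 (k + 1) = 0 := by
  have hk : ((k : ℚ) + 1) ≠ 0 := by positivity
  simp only [Ac, Bc]
  have e1 : (0 : ℚ) - a * ((k + 1 : ℕ) : ℚ) = -a * ((k : ℚ) + 1) := by push_cast; ring
  have e2 : (0 : ℚ) - a - 1 - a * ((k : ℕ) : ℚ) = -a * ((k : ℚ) + 1) - 1 := by push_cast; ring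
  rw [e1, e2]
  have h := gchoose_absorb (-a * ((k : ℚ) + 1)) k
  have h2 : ((k : ℚ) + 1) * (gchoose (-a * ((k : ℚ) + 1)) (k + 1)
      + a * gchoose (-a * ((k : ℚ) + 1) - 1) k) = 0 := by
    rw [mul_add, h]; ring
  exact (mul_eq_zero.mp h2).resolve_left hk

lemma Ac_one (a : ℚ) (k : ℕ) :
    Ac a 1 (k + 1) = gchoose (-a * ((k : ℚ) + 1)) k / ((k : ℚ) + 1) := by
  have hk : ((k : ℚ) + 1) ≠ 0 := by positivity
  simp only [Ac, Bc]
  have e1 : (1 : ℚ) - a * ((k + 1 : ℕ) : ℚ) = 1 - a * ((k : ℚ) + 1) := by push_cast; ring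
  have e2 : (1 : ℚ) - a - 1 - a * ((k : ℕ) : ℚ) = -a * ((k : ℚ) + 1) := by push_cast; ring
  rw [e1, e2]
  have h := gchoose_absorb (1 - a * ((k : ℚ) + 1)) k
  have e3 : (1 : ℚ) - a * ((k : ℚ) + 1) - 1 = -a * ((k : ℚ) + 1) := by ring
  rw [e3] at h
  have h2 : ((k : ℚ) + 1) * (gchoose (1 - a * ((k : ℚ) + 1)) (k + 1)
      + a * gchoose (-a * ((k : ℚ) + 1)) k)
      = ((k : ℚ) + 1) * (gchoose (-a * ((k : ℚ) + 1)) k / ((k : ℚ) + 1)) := by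
    rw [mul_comm ((k : ℚ) + 1) (gchoose (-a * ((k : ℚ) + 1)) k / ((k : ℚ) + 1)),
      div_mul_cancel₀ _ hk, mul_add, h]
    ring
  exact mul_left_cancel₀ hk h2

-- polynomial versions of Ac
noncomputable def pA (a : ℚ) : ℕ → Polynomial ℚ
  | 0 => 1
  | (k + 1) => pg (-a * ((k : ℚ) + 1)) (k + 1) + Polynomial.C a * pg (-a - 1 - a * k) k

lemma eval_pA (a x : ℚ) (k : ℕ) : (pA a k).eval x = Ac a x k := by
  cases k with
  | zero => simp [pA, Ac]
  | succ k =>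
    simp only [pA, Ac, Bc, Polynomial.eval_add, Polynomial.eval_mul, Polynomial.eval_C, eval_pg]
    have e1 : x + -a * ((k : ℚ) + 1) = x - a * ((k + 1 : ℕ) : ℚ) := by push_cast; ring
    have e2 : x + (-a - 1 - a * ((k : ℕ) : ℚ)) = x - a - 1 - a * ((k : ℕ) : ℚ) := by ring
    rw [e1, e2]

/-- Hagen–Rothe type convolution. -/
lemma HR2 (a : ℚ) (n : ℕ) : ∀ x u : ℚ,
    ∑ k ∈ Finset.range (n + 1), Ac a x k * Bc a u (n - k) = Bc a (x + u) n := by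
  induction n with
  | zero => intro x u; simp [Ac, Bc, gchoose_zero]
  | succ n ih =>
    intro x u
    set Dp : Polynomial ℚ :=
      (∑ k ∈ Finset.range (n + 2), pA a k * Polynomial.C (Bc a u (n + 1 - k)))
        - pg (u - a * ((n + 1 : ℕ) : ℚ)) (n + 1) with hDp
    have hevalD : ∀ x : ℚ, Dp.eval x
        = (∑ k ∈ Finset.range (n + 2), Ac a x k * Bc a u (n + 1 - k)) - Bc a (x + u) (n + 1) := by
      intro x
      simp only [hDp, Polynomial.eval_sub, Polynomial.eval_finset_sum, Polynomial.eval_mul,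
        Polynomial.eval_C, eval_pA, eval_pg]
      congr 1
      simp only [Bc]
      congr 1
      ring
    have hstep : ∀ x : ℚ, Dp.eval x = Dp.eval (x - 1) := by
      intro x
      rw [hevalD, hevalD]
      have hS : (∑ k ∈ Finset.range (n + 2), Ac a x k * Bc a u (n + 1 - k))
          - (∑ k ∈ Finset.range (n + 2), Ac a (x - 1) k * Bc a u (n + 1 - k))
          = ∑ k ∈ Finset.range (n + 1), Ac a (x - a - 1) k * Bc a u (n - k) := by
        rw [← Finset.sum_sub_distrib]
        have hc : ∀ k ∈ Finset.range (n + 2),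
            Ac a x k * Bc a u (n + 1 - k) - Ac a (x - 1) k * Bc a u (n + 1 - k)
            = (Ac a x k - Ac a (x - 1) k) * Bc a u (n + 1 - k) := fun k _ => by ring
        rw [Finset.sum_congr rfl hc, Finset.sum_range_succ']
        have h00 : (Ac a x 0 - Ac a (x - 1) 0) * Bc a u (n + 1 - 0) = 0 := by
          show ((1 : ℚ) - 1) * Bc a u (n + 1 - 0) = 0
          ring
        rw [h00, add_zero]
        refine Finset.sum_congr rfl fun j hj => ?_
        have hd : Ac a x (j + 1) - Ac a (x - 1) (j + 1) = Ac a (x - a - 1) j := by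
          have := Ac_pascal a x j
          linarith
        rw [hd, Nat.succ_sub_succ]
      have hB : Bc a (x + u) (n + 1) - Bc a (x - 1 + u) (n + 1) = Bc a (x + u - a - 1) n := by
        have hp := Bc_pascal a (x + u) n
        have e : x + u - 1 = x - 1 + u := by ring
        rw [e] at hp
        linarith
      have hIH := ih (x - a - 1) u
      have e2 : x - a - 1 + u = x + u - a - 1 := by ring
      rw [e2] at hIH
      linarith [hS, hB, hIH]
    have h0 : Dp.eval 0 = 0 := by
      rw [hevalD, Finset.sum_range_succ']
      have hz : ∀ j ∈ Finset.range (n + 1), Ac a 0 (j + 1) * Bc a u (n + 1 - (j + 1)) = 0 :=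
        fun j _ => by rw [Ac_zero]; ring
      rw [Finset.sum_congr rfl hz, Finset.sum_const_zero]
      show (0 : ℚ) + Ac a 0 0 * Bc a u (n + 1 - 0) - Bc a (0 + u) (n + 1) = 0
      show (0 : ℚ) + 1 * Bc a u (n + 1 - 0) - Bc a (0 + u) (n + 1) = 0
      rw [Nat.sub_zero, zero_add, one_mul, zero_add, sub_self]
    have hall := poly_const_of_step Dp hstep h0 x
    rw [hevalD] at hall
    linarith

noncomputable def Fs (a u : ℚ) : PowerSeries ℚ := PowerSeries.mk fun n => Bc a u n

lemma mulF (a x u : ℚ) : PowerSeries.mk (Ac a x) * Fs a u = Fs a (x + u) := by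
  ext n
  rw [PowerSeries.coeff_mul, Finset.Nat.sum_antidiagonal_eq_sum_range_succ_mk]
  simp only [Fs, PowerSeries.coeff_mk]
  exact HR2 a n x u

lemma gSeries_eq (a : ℚ) : gSeries 1 a = PowerSeries.mk (Ac a 1) := by
  ext n
  simp only [gSeries, PowerSeries.coeff_mk]
  cases n with
  | zero => simp [Ac]
  | succ k =>
    rw [if_neg (Nat.succ_ne_zero k), Ac_one]
    have e : (1 : ℚ) - a * ((k + 1 : ℕ) : ℚ) - 1 = -a * ((k : ℚ) + 1) := by push_cast; ring
    rw [e]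
    push_cast
    ring

lemma coeff_pow_eq_zero {w : PowerSeries ℚ} (hw : PowerSeries.constantCoeff w = 0)
    {n k : ℕ} (h : n < k) : PowerSeries.coeff n (w ^ k) = 0 := by
  have hX : (PowerSeries.X : PowerSeries ℚ) ∣ w := PowerSeries.X_dvd_iff.mpr hw
  have : (PowerSeries.X : PowerSeries ℚ) ^ k ∣ w ^ k := pow_dvd_pow_of_dvd hX k
  exact PowerSeries.X_pow_dvd_iff.mp this n h

lemma binPow_nat (w : PowerSeries ℚ) (hw : PowerSeries.constantCoeff w = 0) (m : ℕ) :
    binPow w (m : ℚ) = (1 + w) ^ m := by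
  ext n
  rw [binPow, PowerSeries.coeff_mk]
  have hpow : (1 + w) ^ m = ∑ k ∈ Finset.range (m + 1), w ^ k * (m.choose k : ℚ) • 1 := by
    rw [add_comm (1 : PowerSeries ℚ) w, add_pow]
    exact Finset.sum_congr rfl fun k _ => by
      rw [one_pow]
      simp [Algebra.smul_def]
  rw [hpow, map_sum]
  have hterm : ∀ k, (PowerSeries.coeff n) (w ^ k * (m.choose k : ℚ) • 1)
      = (m.choose k : ℚ) * PowerSeries.coeff n (w ^ k) := by
    intro k
    rw [smul_eq_C_mul, mul_comm (w ^ k)]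
    rw [mul_one, PowerSeries.coeff_C_mul]
  rw [Finset.sum_congr rfl fun k _ => hterm k]
  -- both sums equal the sum over range (max n m + 1)
  set N := max n m with hN
  have hsub1 : Finset.range (n + 1) ⊆ Finset.range (N + 1) := by
    apply Finset.range_subset_range.mpr; omega
  have hsub2 : Finset.range (m + 1) ⊆ Finset.range (N + 1) := by
    apply Finset.range_subset_range.mpr; omega
  rw [Finset.sum_subset hsub1, Finset.sum_subset hsub2]
  · exact Finset.sum_congr rfl fun k _ => by rw [gchoose_nat]
  · intro k hk hk2
    have : m < k := by simp only [Finset.mem_range] at hk hk2; omega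
    rw [Nat.choose_eq_zero_of_lt this]
    simp
  · intro k hk hk2
    have : n < k := by simp only [Finset.mem_range] at hk hk2; omega
    rw [coeff_pow_eq_zero hw this]
    ring

lemma const_coeff_G (a : ℚ) : PowerSeries.constantCoeff (PowerSeries.mk (Ac a 1) - 1) = 0 := by
  have : PowerSeries.constantCoeff (PowerSeries.mk (Ac a 1)) = Ac a 1 0 := by
    rw [← PowerSeries.coeff_zero_eq_constantCoeff_apply, PowerSeries.coeff_mk]
  simp [this, Ac]

lemma pow_mulF (a u : ℚ) (m : ℕ) :
    (PowerSeries.mk (Ac a 1)) ^ m * Fs a u = Fs a ((m : ℚ) + u) := by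
  induction m with
  | zero => simp
  | succ m ih =>
    rw [pow_succ, mul_comm (_ ^ m), mul_assoc, ih, mulF]
    congr 1
    push_cast
    ring

lemma binG_pow (a : ℚ) (m : ℕ) :
    binPow (PowerSeries.mk (Ac a 1) - 1) (m : ℚ) * Fs a a = Fs a ((m : ℚ) + a) := by
  rw [binPow_nat _ (const_coeff_G a) m]
  have h : 1 + (PowerSeries.mk (Ac a 1) - 1) = PowerSeries.mk (Ac a 1) := by ring
  rw [h, pow_mulF]

lemma binG_main (a y : ℚ) :
    binPow (PowerSeries.mk (Ac a 1) - 1) y * Fs a a = Fs a (y + a) := by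
  ext n
  set w := PowerSeries.mk (Ac a 1) - 1 with hw
  set Lp : Polynomial ℚ :=
    ∑ p ∈ Finset.HasAntidiagonal.antidiagonal n,
      (∑ k ∈ Finset.range (p.1 + 1), pg 0 k * Polynomial.C (PowerSeries.coeff p.1 (w ^ k)))
        * Polynomial.C (Bc a a p.2) with hLp
  have hL : ∀ x : ℚ, Lp.eval x = PowerSeries.coeff n (binPow w x * Fs a a) := by
    intro x
    rw [PowerSeries.coeff_mul]
    simp only [hLp, Polynomial.eval_finset_sum, Polynomial.eval_mul, Polynomial.eval_C,
      binPow, Fs, PowerSeries.coeff_mk, eval_pg, add_zero]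
  set Rp : Polynomial ℚ := pg (a - a * (n : ℚ)) n with hRp
  have hR : ∀ x : ℚ, Rp.eval x = PowerSeries.coeff n (Fs a (x + a)) := by
    intro x
    simp only [hRp, eval_pg, Fs, PowerSeries.coeff_mk, Bc]
    congr 1
    ring
  have hnat : ∀ m : ℕ, Lp.eval (m : ℚ) = Rp.eval (m : ℚ) := by
    intro m
    rw [hL, hR, binG_pow]
  have := poly_eq_of_eval_nat Lp Rp hnat
  calc PowerSeries.coeff n (binPow w y * Fs a a) = Lp.eval y := (hL y).symm
    _ = Rp.eval y := by rw [this]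
    _ = PowerSeries.coeff n (Fs a (y + a)) := hR y

/-- `f_{y,a} = (g_{1,a})^y · f_{0,a}` as formal power series in `z`, where
`f_{y,a}(z) = ∑_{n≥0} C(y-a(n-1),n) z^n` and the rational power is the binomial series. -/
theorem stmt5 (y a : ℚ) :
    PowerSeries.mk (fun n => gchoose (y - a * ((n : ℚ) - 1)) n) =
      binPow (gSeries 1 a - 1) y * PowerSeries.mk (fun n => gchoose (-a * ((n : ℚ) - 1)) n) := by
  have h1 : PowerSeries.mk (fun n => gchoose (y - a * ((n : ℚ) - 1)) n) = Fs a (y + a) := by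
    ext n
    simp only [Fs, PowerSeries.coeff_mk, Bc]
    congr 1
    ring
  have h2 : PowerSeries.mk (fun n => gchoose (-a * ((n : ℚ) - 1)) n) = Fs a a := by
    ext n
    simp only [Fs, PowerSeries.coeff_mk, Bc]
    congr 1
    ring
  rw [h1, h2, gSeries_eq, binG_main]
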